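/- Let Q be a forest poset. In the ring ℚ[[t]] of formal power series, let H := t + Σ_{n ≥ 2} c(n)·tⁿ where c(n) is the number of Q-alternating Schröder trees with n leaves, for each a ∈ Q let H^a := Σ_{n ≥ 2} c_a(n)·tⁿ where c_a(n) is the number of Q-alternating Schröder trees with n leaves whose root is labeled a, and let H̄^a := Σ_{b ∈ Q incomparable with a} H^b. Then H = t + Σ_{a ∈ Q} H^a, and for every a ∈ Q, H^a = (t + H̄^a)·(t + H̄^a + H^a). (For a forest poset Q, H is the Hilbert series of the operad As(Q).) -/

import Mathlib

open scoped Classical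

/-- A forest poset: for all `a b c`, if `a ≼ c` and `b ≼ c` then `a` and `b` are
comparable. -/
def IsForestPoset (Q : Type*) [PartialOrder Q] : Prop :=
  ∀ a b c : Q, a ≤ c → b ≤ c → a ≤ b ∨ b ≤ a

/-- Planar rooted trees with internal nodes labeled by `Q` and an arbitrary (finite)
list of children.  `Q`-Schröder trees are those satisfying `SchWF` below. -/
inductive SchTree (Q : Type*) where
  | leaf : SchTree Q
  | node : Q → List (SchTree Q) → SchTree Q

/-- Well-formedness for `Q`-Schröder trees: every internal node has at least two
children. -/
inductive SchWF {Q : Type*} : SchTree Q → Prop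
  | leaf : SchWF .leaf
  | node (a : Q) (ts : List (SchTree Q)) :
      2 ≤ ts.length → (∀ t ∈ ts, SchWF t) → SchWF (.node a ts)

/-- A tree is `Q`-alternating if whenever an internal node labeled `a` has an
internal-node child labeled `b`, the elements `a` and `b` are incomparable in `Q`. -/
inductive Alt {Q : Type*} [PartialOrder Q] : SchTree Q → Prop
  | leaf : Alt .leaf
  | node (a : Q) (ts : List (SchTree Q)) :
      (∀ t ∈ ts, Alt t) →
      (∀ (b : Q) (cs : List (SchTree Q)), SchTree.node b cs ∈ ts → ¬ a ≤ b ∧ ¬ b ≤ a) →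
      Alt (.node a ts)

/-- The root label of a Schröder tree, `none` for a leaf. -/
def schRoot {Q : Type*} : SchTree Q → Option Q
  | .leaf => none
  | .node a _ => some a

mutual
  /-- The number of leaves of a Schröder tree. -/
  def schLeaves {Q : Type*} : SchTree Q → ℕ
    | .leaf => 1
    | .node _ ts => schLeavesList ts

  /-- Total number of leaves of a list of Schröder trees. -/
  def schLeavesList {Q : Type*} : List (SchTree Q) → ℕ
    | [] => 0
    | t :: ts => schLeaves t + schLeavesList ts
end

variable (Q : Type*) [Fintype Q] [PartialOrder Q]

/-- `c(n)`: the number of `Q`-alternating Schröder trees with `n` leaves. -/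
noncomputable def cAll (n : ℕ) : ℕ :=
  Set.ncard {s : SchTree Q | SchWF s ∧ Alt s ∧ schLeaves s = n}

/-- `c_a(n)`: the number of `Q`-alternating Schröder trees with `n` leaves whose root is
labeled `a`. -/
noncomputable def cRoot (a : Q) (n : ℕ) : ℕ :=
  Set.ncard {s : SchTree Q | SchWF s ∧ Alt s ∧ schRoot s = some a ∧ schLeaves s = n}

/-- The series `H = t + Σ_{n ≥ 2} c(n)·tⁿ ∈ ℚ[[t]]` (the Hilbert series of `As(Q)` when
`Q` is a forest poset). -/
noncomputable def Hser : PowerSeries ℚ :=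
  PowerSeries.mk fun n => if n = 1 then 1 else if 2 ≤ n then (cAll Q n : ℚ) else 0

/-- The series `H^a = Σ_{n ≥ 2} c_a(n)·tⁿ ∈ ℚ[[t]]`. -/
noncomputable def Hroot (a : Q) : PowerSeries ℚ :=
  PowerSeries.mk fun n => if 2 ≤ n then (cRoot Q a n : ℚ) else 0

/-- The series `H̄^a = Σ_{b incomparable with a} H^b`. -/
noncomputable def Hbar (a : Q) : PowerSeries ℚ :=
  ∑ b ∈ Finset.univ.filter (fun b : Q => ¬ a ≤ b ∧ ¬ b ≤ a), Hroot Q b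
section Aux
variable {Q : Type*}

lemma schLeavesList_cons (t : SchTree Q) (ts : List (SchTree Q)) :
    schLeavesList (t :: ts) = schLeaves t + schLeavesList ts := rfl

lemma schLeaves_pos {s : SchTree Q} (h : SchWF s) : 1 ≤ schLeaves s := by
  induction h with
  | leaf => simp [schLeaves]
  | node a ts hlen hwf ih =>
    show 1 ≤ schLeavesList ts
    match ts, hlen with
    | t :: ts, _ =>
      have := ih t (by simp)
      rw [schLeavesList_cons]; omega

lemma length_le_schLeavesList {ts : List (SchTree Q)} (h : ∀ t ∈ ts, SchWF t) :
    ts.length ≤ schLeavesList ts := by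
  induction ts with
  | nil => simp [schLeavesList]
  | cons t ts ih =>
    have h1 := schLeaves_pos (h t (by simp))
    have h2 := ih (fun t ht => h t (by simp [ht]))
    rw [schLeavesList_cons]; simp; omega

lemma two_le_schLeaves_node {a : Q} {ts : List (SchTree Q)}
    (h : SchWF (SchTree.node a ts)) : 2 ≤ schLeaves (SchTree.node a ts) := by
  cases h with
  | node _ _ hlen hwf =>
    have := length_le_schLeavesList hwf
    show 2 ≤ schLeavesList ts
    omega

lemma schLeaves_le_of_mem {t : SchTree Q} {ts : List (SchTree Q)} (ht : t ∈ ts) :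
    schLeaves t ≤ schLeavesList ts := by
  induction ts with
  | nil => simp at ht
  | cons u us ih =>
    rw [schLeavesList_cons]
    rcases List.mem_cons.mp ht with rfl | hmem
    · omega
    · have := ih hmem; omega

lemma schLeaves_lt_of_mem {t : SchTree Q} {ts : List (SchTree Q)}
    (hlen : 2 ≤ ts.length) (hwf : ∀ t ∈ ts, SchWF t) (ht : t ∈ ts) :
    schLeaves t < schLeavesList ts := by
  induction ts with
  | nil => simp at ht
  | cons u us ih =>
    rw [schLeavesList_cons]
    rcases List.mem_cons.mp ht with rfl | hmem
    · have : 1 ≤ us.length := by simp at hlen; omega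
      match us, this with
      | v :: vs, _ =>
        have := schLeaves_pos (hwf v (by simp))
        rw [schLeavesList_cons]; omega
    · have h1 := schLeaves_pos (hwf u (by simp))
      have h2 := schLeaves_le_of_mem hmem
      omega

end Aux
section Fin
variable {Q : Type*} [Finite Q]

lemma finite_wf_leaves (n : ℕ) :
    {s : SchTree Q | SchWF s ∧ schLeaves s = n}.Finite := by
  induction n using Nat.strong_induction_on with
  | _ n ih =>
    set S : Set (SchTree Q) := {s | SchWF s ∧ schLeaves s < n} with hS
    have hSfin : S.Finite := by
      have : S = ⋃ m ∈ Finset.range n, {s : SchTree Q | SchWF s ∧ schLeaves s = m} := by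
        ext s; simp [hS]
      rw [this]
      apply Set.Finite.biUnion (Finset.range n).finite_toSet
      intro m hm
      exact ih m (by simpa using hm)
    have : Finite ↥S := hSfin.to_subtype
    have hLfin : {l : List (SchTree Q) | l.length ≤ n ∧ ∀ x ∈ l, x ∈ S}.Finite := by
      have h1 : ((List.map (Subtype.val : ↥S → SchTree Q)) ''
          {l : List ↥S | l.length ≤ n}).Finite :=
        (List.finite_length_le ↥S n).image _
      refine h1.subset ?_
      rintro l ⟨hlen, hmem⟩
      refine ⟨l.pmap (fun x hx => (⟨x, hx⟩ : ↥S)) hmem, by simpa using hlen, ?_⟩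
      simp [List.map_pmap]
    have hsub : {s : SchTree Q | SchWF s ∧ schLeaves s = n} ⊆
        {SchTree.leaf} ∪ ((fun p : Q × List (SchTree Q) => SchTree.node p.1 p.2) ''
          (Set.univ ×ˢ {l : List (SchTree Q) | l.length ≤ n ∧ ∀ x ∈ l, x ∈ S})) := by
      rintro s ⟨hwf, hlv⟩
      cases s with
      | leaf => left; rfl
      | node a ts =>
        right
        refine ⟨(a, ts), ⟨trivial, ?_, ?_⟩, rfl⟩
        · show ts.length ≤ n
          cases hwf with
          | node _ _ hlen hwfl =>
            have := length_le_schLeavesList hwfl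
            have : schLeavesList ts = n := hlv
            omega
        · show ∀ x ∈ ts, x ∈ S
          intro x hx
          cases hwf with
          | node _ _ hlen hwfl =>
            refine ⟨hwfl x hx, ?_⟩
            have := schLeaves_lt_of_mem hlen hwfl hx
            have hn : schLeavesList ts = n := hlv
            omega
    exact ((Set.finite_singleton _).union
      ((Set.finite_univ.prod hLfin).image _)).subset hsub

end Fin
section Bij
variable {Q : Type*} [PartialOrder Q]
set_option linter.unusedSectionVars false

open scoped Classical in
/-- Combine a pair of trees into a tree with root label `a`. -/
noncomputable def comb (a : Q) : SchTree Q × SchTree Q → SchTree Q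
  | (u, SchTree.leaf) => SchTree.node a [u, SchTree.leaf]
  | (u, SchTree.node b cs) =>
      if b = a then SchTree.node a (u :: cs) else SchTree.node a [u, SchTree.node b cs]

def USet (a : Q) : Set (SchTree Q) :=
  {s | SchWF s ∧ Alt s ∧ (s = .leaf ∨ ∃ b cs, s = .node b cs ∧ ¬ a ≤ b ∧ ¬ b ≤ a)}

def RSet (a : Q) : Set (SchTree Q) :=
  {s | SchWF s ∧ Alt s ∧
    (s = .leaf ∨ ∃ b cs, s = .node b cs ∧ (b = a ∨ (¬ a ≤ b ∧ ¬ b ≤ a)))}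

def ASet (a : Q) : Set (SchTree Q) :=
  {s | SchWF s ∧ Alt s ∧ ∃ cs, s = .node a cs}

lemma schLeaves_comb (a : Q) (u v : SchTree Q) :
    schLeaves (comb a (u, v)) = schLeaves u + schLeaves v := by
  cases v with
  | leaf =>
      show schLeavesList [u, SchTree.leaf] = _
      simp [schLeavesList_cons, schLeavesList, schLeaves]
  | node b cs =>
      by_cases hb : b = a
      · show schLeaves (if b = a then SchTree.node a (u :: cs)
            else SchTree.node a [u, SchTree.node b cs]) = _
        rw [if_pos hb]
        show schLeavesList (u :: cs) = _
        rw [schLeavesList_cons]; rfl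
      · show schLeaves (if b = a then SchTree.node a (u :: cs)
            else SchTree.node a [u, SchTree.node b cs]) = _
        rw [if_neg hb]
        show schLeavesList [u, SchTree.node b cs] = _
        rw [schLeavesList_cons, schLeavesList_cons]
        show _ + (schLeaves (SchTree.node b cs) + 0) = _
        omega

lemma comb_mapsTo (a : Q) : Set.MapsTo (comb a) (USet a ×ˢ RSet a) (ASet a) := by
  rintro ⟨u, v⟩ ⟨⟨huw, hua, hu⟩, hvw, hva, hv⟩
  have hunode : ∀ b cs, SchTree.node b cs = u → ¬ a ≤ b ∧ ¬ b ≤ a := by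
    rintro b cs rfl
    rcases hu with h | ⟨b', cs', heq, h1, h2⟩
    · exact absurd h (by simp)
    · cases heq; exact ⟨h1, h2⟩
  cases v with
  | leaf =>
      refine ⟨?_, ?_, [u, .leaf], rfl⟩
      · exact SchWF.node a _ (by simp) (by rintro t ht; simp at ht; rcases ht with rfl | rfl
                                           exacts [huw, SchWF.leaf])
      · refine Alt.node a _ ?_ ?_
        · rintro t ht; simp at ht; rcases ht with rfl | rfl; exacts [hua, Alt.leaf]
        · rintro b cs hmem
          simp at hmem
          exact hunode b cs hmem
  | node b cs =>
      rcases hv with h | ⟨b', cs', heq, hcase⟩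
      · exact absurd h (by simp)
      cases heq
      show (if b = a then SchTree.node a (u :: cs)
            else SchTree.node a [u, SchTree.node b cs]) ∈ ASet a
      by_cases hb : b = a
      · subst hb
        rw [if_pos rfl]
        cases hvw with
        | node _ _ hlen hwfl =>
        cases hva with
        | node _ _ haltl hinc =>
        refine ⟨SchWF.node b _ (by simp; omega) ?_, Alt.node b _ ?_ ?_, _, rfl⟩
        · rintro t ht; simp at ht; rcases ht with rfl | ht; exacts [huw, hwfl t ht]
        · rintro t ht; simp at ht; rcases ht with rfl | ht; exacts [hua, haltl t ht]
        · rintro c ds hmem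
          simp at hmem
          rcases hmem with h | h
          · exact hunode c ds h
          · exact hinc c ds h
      · rw [if_neg hb]
        rcases hcase with h | ⟨h1, h2⟩
        · exact absurd h hb
        refine ⟨SchWF.node a _ (by simp) ?_, Alt.node a _ ?_ ?_, _, rfl⟩
        · rintro t ht; simp at ht; rcases ht with rfl | rfl; exacts [huw, hvw]
        · rintro t ht; simp at ht; rcases ht with rfl | rfl; exacts [hua, hva]
        · rintro c ds hmem
          simp at hmem
          rcases hmem with h | ⟨h1', h2'⟩
          · exact hunode c ds h
          · subst h1'; subst h2'; exact ⟨h1, h2⟩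

end Bij
section Bij2
variable {Q : Type*} [PartialOrder Q]
set_option linter.unusedSectionVars false

open scoped Classical in
lemma comb_leaf (a : Q) (u : SchTree Q) :
    comb a (u, SchTree.leaf) = SchTree.node a [u, SchTree.leaf] := rfl

open scoped Classical in
lemma comb_node (a b : Q) (u : SchTree Q) (cs : List (SchTree Q)) :
    comb a (u, SchTree.node b cs) =
      if b = a then SchTree.node a (u :: cs)
      else SchTree.node a [u, SchTree.node b cs] := rfl

lemma comb_injOn (a : Q) : Set.InjOn (comb a) (USet a ×ˢ RSet a) := by
  rintro ⟨u, v⟩ ⟨hu, hvw, hva, hv⟩ ⟨u', v'⟩ ⟨hu', hv'w, hv'a, hv'⟩ heq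
  simp only [Prod.mk.injEq]
  cases v with
  | leaf =>
    cases v' with
    | leaf =>
      rw [comb_leaf, comb_leaf] at heq
      simp only [SchTree.node.injEq, List.cons.injEq] at heq
      exact ⟨heq.2.1, rfl⟩
    | node b' cs' =>
      rw [comb_leaf, comb_node] at heq
      split_ifs at heq with hb
      · simp only [SchTree.node.injEq, List.cons.injEq] at heq
        subst hb
        have h2 : 2 ≤ cs'.length := by cases hv'w; assumption
        have : cs' = [SchTree.leaf] := heq.2.2.symm
        rw [this] at h2; simp at h2
      · simp only [SchTree.node.injEq, List.cons.injEq] at heq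
        exact absurd heq.2.2.1 (by simp)
  | node b cs =>
    cases v' with
    | leaf =>
      rw [comb_leaf, comb_node] at heq
      split_ifs at heq with hb
      · simp only [SchTree.node.injEq, List.cons.injEq] at heq
        subst hb
        have h2 : 2 ≤ cs.length := by cases hvw; assumption
        have : cs = [SchTree.leaf] := heq.2.2
        rw [this] at h2; simp at h2
      · simp only [SchTree.node.injEq, List.cons.injEq] at heq
        exact absurd heq.2.2.1 (by simp)
    | node b' cs' =>
      rw [comb_node, comb_node] at heq
      split_ifs at heq with hb hb' hb'
      · subst hb; subst hb'
        simp only [SchTree.node.injEq, List.cons.injEq] at heq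
        exact ⟨heq.2.1, by rw [heq.2.2]⟩
      · subst hb
        simp only [SchTree.node.injEq, List.cons.injEq] at heq
        have h2 : 2 ≤ cs.length := by cases hvw; assumption
        rw [heq.2.2] at h2; simp at h2
      · subst hb'
        simp only [SchTree.node.injEq, List.cons.injEq] at heq
        have h2 : 2 ≤ cs'.length := by cases hv'w; assumption
        rw [← heq.2.2] at h2
        simp at h2
      · simp only [SchTree.node.injEq, List.cons.injEq] at heq
        exact ⟨heq.2.1, by rw [heq.2.2.1.1, heq.2.2.1.2]⟩

lemma comb_surjOn (a : Q) : Set.SurjOn (comb a) (USet a ×ˢ RSet a) (ASet a) := by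
  rintro s ⟨hwf, halt, cs, rfl⟩
  cases hwf with
  | node _ _ hlen hwfl =>
  cases halt with
  | node _ _ haltl hinc =>
  match cs, hlen with
  | u :: w :: rest, _ =>
  have hu : u ∈ USet a := by
    refine ⟨hwfl u (by simp), haltl u (by simp), ?_⟩
    cases u with
    | leaf => exact Or.inl rfl
    | node b ds => exact Or.inr ⟨b, ds, rfl, hinc b ds (by simp)⟩
  cases rest with
  | nil =>
    have hw : w ∈ RSet a := by
      refine ⟨hwfl w (by simp), haltl w (by simp), ?_⟩
      cases w with
      | leaf => exact Or.inl rfl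
      | node b ds => exact Or.inr ⟨b, ds, rfl, Or.inr (hinc b ds (by simp))⟩
    refine ⟨(u, w), Set.mk_mem_prod hu hw, ?_⟩
    cases w with
    | leaf => rw [comb_leaf]
    | node b ds =>
      rw [comb_node]
      have hinc' := hinc b ds (by simp)
      have hb : b ≠ a := by rintro rfl; exact hinc'.1 le_rfl
      rw [if_neg hb]
  | cons x rest' =>
    have hv : SchTree.node a (w :: x :: rest') ∈ RSet a := by
      refine ⟨SchWF.node a _ (by simp) ?_, Alt.node a _ ?_ ?_, ?_⟩
      · intro t ht; exact hwfl t (by simp at ht ⊢; tauto)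
      · intro t ht; exact haltl t (by simp at ht ⊢; tauto)
      · intro c ds hmem; exact hinc c ds (by simp at hmem ⊢; tauto)
      · exact Or.inr ⟨a, _, rfl, Or.inl rfl⟩
    refine ⟨(u, SchTree.node a (w :: x :: rest')), Set.mk_mem_prod hu hv, ?_⟩
    rw [comb_node, if_pos rfl]

end Bij2
section Count
set_option linter.unusedSectionVars false

lemma ncard_eq_sum_over {α ι : Type*} (F : Finset ι) (g : ι → Set α) (T : Set α)
    (hfin : ∀ b, (g b).Finite)
    (hcover : T = ⋃ b ∈ F, g b)
    (hdisj : ∀ b ∈ F, ∀ c ∈ F, b ≠ c → Disjoint (g b) (g c)) :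
    T.ncard = ∑ b ∈ F, (g b).ncard := by
  classical
  have hTF : T.Finite := by
    rw [hcover]; exact Set.Finite.biUnion F.finite_toSet (fun b _ => hfin b)
  rw [Set.ncard_eq_toFinset_card _ hTF]
  have hto : hTF.toFinset = F.biUnion (fun b => (hfin b).toFinset) := by
    ext x
    simp [Set.Finite.mem_toFinset, Finset.mem_biUnion, hcover, Set.mem_iUnion]
  rw [hto, Finset.card_biUnion]
  · exact Finset.sum_congr rfl fun b _ => (Set.ncard_eq_toFinset_card _ (hfin b)).symm
  · intro b hb c hc hbc
    rw [Function.onFun, Finset.disjoint_left]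
    intro x hx hx'
    exact (hdisj b hb c hc hbc).le_bot
      ⟨(hfin b).mem_toFinset.mp hx, (hfin c).mem_toFinset.mp hx'⟩

lemma ncard_prod' {α β : Type*} {s : Set α} {t : Set β} (hs : s.Finite) (ht : t.Finite) :
    (s ×ˢ t).ncard = s.ncard * t.ncard := by
  rw [Set.ncard_eq_toFinset_card _ (hs.prod ht), Set.ncard_eq_toFinset_card _ hs,
    Set.ncard_eq_toFinset_card _ ht, ← Finset.card_product, ← Set.Finite.toFinset_prod]

variable {Q : Type*} [Fintype Q] [PartialOrder Q]

lemma schRoot_eq_some_iff {s : SchTree Q} {a : Q} :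
    schRoot s = some a ↔ ∃ cs, s = SchTree.node a cs := by
  cases s with
  | leaf => simp [schRoot]
  | node b cs =>
      simp only [schRoot, Option.some.injEq, SchTree.node.injEq]
      constructor
      · rintro rfl; exact ⟨cs, rfl, rfl⟩
      · rintro ⟨ds, rfl, rfl⟩; rfl

lemma finiteRootSet (a : Q) (n : ℕ) :
    {s : SchTree Q | SchWF s ∧ Alt s ∧ schRoot s = some a ∧ schLeaves s = n}.Finite :=
  (finite_wf_leaves n).subset (by rintro s ⟨h1, _, _, h4⟩; exact ⟨h1, h4⟩)

lemma cRoot_small (a : Q) {n : ℕ} (hn : n < 2) : cRoot Q a n = 0 := by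
  rw [cRoot, Set.ncard_eq_zero (finiteRootSet a n)]
  ext s
  simp only [Set.mem_setOf_eq, Set.mem_empty_iff_false, iff_false]
  rintro ⟨hwf, _, hroot, hlv⟩
  obtain ⟨cs, rfl⟩ := schRoot_eq_some_iff.mp hroot
  have := two_le_schLeaves_node hwf
  omega

lemma cAll_eq_sum {n : ℕ} (hn : 2 ≤ n) : cAll Q n = ∑ a : Q, cRoot Q a n := by
  refine ncard_eq_sum_over Finset.univ
    (fun a => {s : SchTree Q | SchWF s ∧ Alt s ∧ schRoot s = some a ∧ schLeaves s = n})
    _ (fun a => finiteRootSet a n) ?_ ?_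
  · ext s
    simp only [Set.mem_setOf_eq, Set.mem_iUnion, Finset.mem_univ, exists_true_left,
      exists_prop, true_and]
    constructor
    · rintro ⟨hwf, halt, hlv⟩
      cases s with
      | leaf =>
          exfalso
          have : schLeaves (SchTree.leaf : SchTree Q) = 1 := rfl
          omega
      | node a ts => exact ⟨a, hwf, halt, rfl, hlv⟩
    · rintro ⟨a, hwf, halt, _, hlv⟩; exact ⟨hwf, halt, hlv⟩
  · intro b _ c _ hbc
    rw [Set.disjoint_left]
    rintro s ⟨_, _, hb, _⟩ ⟨_, _, hc, _⟩
    rw [hb] at hc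
    exact hbc (Option.some.injEq _ _ ▸ hc.symm ▸ rfl)

lemma USet_mem_wf {a : Q} {s : SchTree Q} (h : s ∈ USet a) : SchWF s := h.1
lemma RSet_mem_wf {a : Q} {s : SchTree Q} (h : s ∈ RSet a) : SchWF s := h.1

lemma finiteU (a : Q) (i : ℕ) : (USet a ∩ {s | schLeaves s = i}).Finite :=
  (finite_wf_leaves i).subset (by rintro s ⟨⟨h1, _⟩, h2⟩; exact ⟨h1, h2⟩)

lemma finiteR (a : Q) (i : ℕ) : (RSet a ∩ {s | schLeaves s = i}).Finite :=
  (finite_wf_leaves i).subset (by rintro s ⟨⟨h1, _⟩, h2⟩; exact ⟨h1, h2⟩)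

lemma inter_leaves_zero {X : Set (SchTree Q)} (hX : ∀ s ∈ X, SchWF s) :
    X ∩ {s | schLeaves s = 0} = ∅ := by
  ext s
  simp only [Set.mem_inter_iff, Set.mem_setOf_eq, Set.mem_empty_iff_false, iff_false, not_and]
  intro hs hl
  have := schLeaves_pos (hX s hs)
  omega

lemma inter_leaves_one {X : Set (SchTree Q)} (hX : ∀ s ∈ X, SchWF s)
    (hleaf : SchTree.leaf ∈ X) : X ∩ {s | schLeaves s = 1} = {SchTree.leaf} := by
  ext s
  simp only [Set.mem_inter_iff, Set.mem_setOf_eq, Set.mem_singleton_iff]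
  constructor
  · rintro ⟨hs, hl⟩
    cases s with
    | leaf => rfl
    | node b cs =>
        have := two_le_schLeaves_node (hX _ hs)
        omega
  · rintro rfl
    exact ⟨hleaf, rfl⟩

lemma leaf_mem_USet (a : Q) : SchTree.leaf ∈ USet a := ⟨SchWF.leaf, Alt.leaf, Or.inl rfl⟩
lemma leaf_mem_RSet (a : Q) : SchTree.leaf ∈ RSet a := ⟨SchWF.leaf, Alt.leaf, Or.inl rfl⟩

lemma uC_eq {a : Q} {i : ℕ} (hi : 2 ≤ i) :
    (USet a ∩ {s | schLeaves s = i}).ncard =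
      ∑ b ∈ Finset.univ.filter (fun b : Q => ¬ a ≤ b ∧ ¬ b ≤ a), cRoot Q b i := by
  refine ncard_eq_sum_over _
    (fun b => {s : SchTree Q | SchWF s ∧ Alt s ∧ schRoot s = some b ∧ schLeaves s = i})
    _ (fun b => finiteRootSet b i) ?_ ?_
  · ext s
    simp only [Set.mem_inter_iff, Set.mem_setOf_eq, Set.mem_iUnion, Finset.mem_filter,
      Finset.mem_univ, true_and, exists_prop]
    constructor
    · rintro ⟨⟨hwf, halt, hcase⟩, hlv⟩
      rcases hcase with rfl | ⟨b, cs, rfl, h1, h2⟩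
      · exfalso
        have : schLeaves (SchTree.leaf : SchTree Q) = 1 := rfl
        omega
      · exact ⟨b, ⟨h1, h2⟩, hwf, halt, rfl, hlv⟩
    · rintro ⟨b, ⟨h1, h2⟩, hwf, halt, hroot, hlv⟩
      obtain ⟨cs, rfl⟩ := schRoot_eq_some_iff.mp hroot
      exact ⟨⟨hwf, halt, Or.inr ⟨b, cs, rfl, h1, h2⟩⟩, hlv⟩
  · intro b _ c _ hbc
    rw [Set.disjoint_left]
    rintro s ⟨_, _, hb, _⟩ ⟨_, _, hc, _⟩
    rw [hb] at hc
    exact hbc (by injection hc)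

lemma rC_eq {a : Q} {i : ℕ} (hi : 2 ≤ i) :
    (RSet a ∩ {s | schLeaves s = i}).ncard =
      cRoot Q a i + ∑ b ∈ Finset.univ.filter (fun b : Q => ¬ a ≤ b ∧ ¬ b ≤ a), cRoot Q b i := by
  classical
  have hanotmem : a ∉ Finset.univ.filter (fun b : Q => ¬ a ≤ b ∧ ¬ b ≤ a) := by
    simp
  have := ncard_eq_sum_over
    (insert a (Finset.univ.filter (fun b : Q => ¬ a ≤ b ∧ ¬ b ≤ a)))
    (fun b => {s : SchTree Q | SchWF s ∧ Alt s ∧ schRoot s = some b ∧ schLeaves s = i})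
    (RSet a ∩ {s | schLeaves s = i}) (fun b => finiteRootSet b i) ?_ ?_
  · rw [this, Finset.sum_insert hanotmem]; rfl
  · ext s
    simp only [Set.mem_inter_iff, Set.mem_setOf_eq, Set.mem_iUnion, Finset.mem_insert,
      Finset.mem_filter, Finset.mem_univ, true_and, exists_prop]
    constructor
    · rintro ⟨⟨hwf, halt, hcase⟩, hlv⟩
      rcases hcase with rfl | ⟨b, cs, rfl, hb⟩
      · exfalso
        have : schLeaves (SchTree.leaf : SchTree Q) = 1 := rfl
        omega
      · refine ⟨b, ?_, hwf, halt, rfl, hlv⟩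
        rcases hb with rfl | hb
        · exact Or.inl rfl
        · exact Or.inr hb
    · rintro ⟨b, hb, hwf, halt, hroot, hlv⟩
      obtain ⟨cs, rfl⟩ := schRoot_eq_some_iff.mp hroot
      refine ⟨⟨hwf, halt, Or.inr ⟨b, cs, rfl, ?_⟩⟩, hlv⟩
      rcases hb with rfl | hb
      · exact Or.inl rfl
      · exact Or.inr hb
  · intro b _ c _ hbc
    rw [Set.disjoint_left]
    rintro s ⟨_, _, hb, _⟩ ⟨_, _, hc, _⟩
    rw [hb] at hc
    exact hbc (by injection hc)

end Count
section Main
set_option linter.unusedSectionVars false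
variable {Q : Type*} [Fintype Q] [PartialOrder Q]

lemma cRoot_eq_sum (a : Q) (n : ℕ) :
    cRoot Q a n = ∑ p ∈ Finset.HasAntidiagonal.antidiagonal n,
      (USet a ∩ {s | schLeaves s = p.1}).ncard *
        (RSet a ∩ {s | schLeaves s = p.2}).ncard := by
  classical
  have hAeq : {s : SchTree Q | SchWF s ∧ Alt s ∧ schRoot s = some a ∧ schLeaves s = n}
      = ASet a ∩ {s | schLeaves s = n} := by
    ext s
    simp only [Set.mem_setOf_eq, Set.mem_inter_iff, ASet, schRoot_eq_some_iff]
    tauto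
  set D := (USet a ×ˢ RSet a) ∩
    {p : SchTree Q × SchTree Q | schLeaves p.1 + schLeaves p.2 = n} with hD
  have himg : comb a '' D = ASet a ∩ {s | schLeaves s = n} := by
    apply Set.Subset.antisymm
    · rintro s ⟨⟨u, v⟩, ⟨hmem, hsum⟩, rfl⟩
      refine ⟨comb_mapsTo a hmem, ?_⟩
      rw [Set.mem_setOf_eq, schLeaves_comb]
      exact hsum
    · rintro s ⟨hA, hlv⟩
      obtain ⟨⟨u, v⟩, hmem, rfl⟩ := comb_surjOn a hA
      refine ⟨(u, v), ⟨hmem, ?_⟩, rfl⟩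
      have := schLeaves_comb a u v
      rw [Set.mem_setOf_eq] at hlv ⊢
      show schLeaves u + schLeaves v = n
      omega
  have hinj : Set.InjOn (comb a) D := (comb_injOn a).mono Set.inter_subset_left
  have h1 : cRoot Q a n = D.ncard := by
    rw [cRoot, hAeq, ← himg, Set.ncard_image_of_injOn hinj]
  rw [h1]
  refine (ncard_eq_sum_over (Finset.HasAntidiagonal.antidiagonal n)
    (fun p => (USet a ∩ {s | schLeaves s = p.1}) ×ˢ (RSet a ∩ {s | schLeaves s = p.2})) D
    (fun p => (finiteU a p.1).prod (finiteR a p.2)) ?_ ?_).trans ?_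
  · ext ⟨u, v⟩
    simp only [hD, Set.mem_inter_iff, Set.mem_prod, Set.mem_setOf_eq, Set.mem_iUnion,
      Finset.HasAntidiagonal.mem_antidiagonal, exists_prop]
    constructor
    · rintro ⟨⟨hu, hv⟩, hsum⟩
      exact ⟨(schLeaves u, schLeaves v), hsum, ⟨hu, rfl⟩, ⟨hv, rfl⟩⟩
    · rintro ⟨⟨i, j⟩, hij, ⟨hu, hu2⟩, hv, hv2⟩
      refine ⟨⟨hu, hv⟩, ?_⟩
      simp only at hij hu2 hv2
      omega
  · rintro ⟨i, j⟩ hij ⟨i', j'⟩ hij' hne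
    rw [Set.disjoint_left]
    rintro ⟨u, v⟩ hmem hmem'
    simp only [Set.mem_prod, Set.mem_inter_iff, Set.mem_setOf_eq] at hmem hmem'
    exact hne (by
      have h1 := hmem.1.2
      have h2 := hmem.2.2
      have h1' := hmem'.1.2
      have h2' := hmem'.2.2
      exact Prod.ext (by omega) (by omega))
  · exact Finset.sum_congr rfl fun p _ => ncard_prod' (finiteU a p.1) (finiteR a p.2)

lemma coeff_left (a : Q) (n : ℕ) :
    PowerSeries.coeff n (PowerSeries.X + Hbar Q a) =
      ((USet a ∩ {s | schLeaves s = n}).ncard : ℚ) := by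
  rw [map_add, PowerSeries.coeff_X, Hbar, map_sum]
  have hco : ∀ b : Q, PowerSeries.coeff n (Hroot Q b) =
      if 2 ≤ n then (cRoot Q b n : ℚ) else 0 := fun b => PowerSeries.coeff_mk _ _
  match n with
  | 0 =>
      rw [inter_leaves_zero (fun s hs => hs.1)]
      simp [hco]
  | 1 =>
      rw [inter_leaves_one (fun s hs => hs.1) (leaf_mem_USet a)]
      simp [hco]
  | (m+2) =>
      rw [uC_eq (by omega)]
      simp only [hco, if_pos (by omega : 2 ≤ m + 2), if_neg (by omega : ¬ m + 2 = 1)]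
      rw [Nat.cast_sum, zero_add]

lemma coeff_right (a : Q) (n : ℕ) :
    PowerSeries.coeff n (PowerSeries.X + Hbar Q a + Hroot Q a) =
      ((RSet a ∩ {s | schLeaves s = n}).ncard : ℚ) := by
  rw [map_add, map_add, PowerSeries.coeff_X, Hbar, map_sum]
  have hco : ∀ b : Q, PowerSeries.coeff n (Hroot Q b) =
      if 2 ≤ n then (cRoot Q b n : ℚ) else 0 := fun b => PowerSeries.coeff_mk _ _
  match n with
  | 0 =>
      rw [inter_leaves_zero (fun s hs => hs.1)]
      simp [hco]
  | 1 =>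
      rw [inter_leaves_one (fun s hs => hs.1) (leaf_mem_RSet a)]
      simp [hco]
  | (m+2) =>
      rw [rC_eq (by omega)]
      simp only [hco, if_pos (by omega : 2 ≤ m + 2), if_neg (by omega : ¬ m + 2 = 1)]
      rw [Nat.cast_add, Nat.cast_sum, zero_add]
      ring

end Main
/-- For a forest poset `Q`: `H = t + Σ_{a ∈ Q} H^a`, and for every `a ∈ Q`,
`H^a = (t + H̄^a) · (t + H̄^a + H^a)`. -/
theorem hilbert_series_functional_equation (hQ : IsForestPoset Q) :
    (Hser Q = PowerSeries.X + ∑ a : Q, Hroot Q a) ∧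
    ∀ a : Q, Hroot Q a =
      (PowerSeries.X + Hbar Q a) * (PowerSeries.X + Hbar Q a + Hroot Q a) := by
  classical
  have hco : ∀ (b : Q) (n : ℕ), PowerSeries.coeff n (Hroot Q b) =
      if 2 ≤ n then (cRoot Q b n : ℚ) else 0 := fun b n => PowerSeries.coeff_mk _ _
  constructor
  · ext n
    rw [Hser, PowerSeries.coeff_mk, map_add, PowerSeries.coeff_X, map_sum]
    match n with
    | 0 => simp [hco]
    | 1 => simp [hco]
    | (m + 2) =>
        simp only [if_neg (show ¬ (m + 2) = 1 by omega), if_pos (show 2 ≤ m + 2 by omega),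
          zero_add]
        rw [cAll_eq_sum (by omega : 2 ≤ m + 2), Nat.cast_sum]
        exact Finset.sum_congr rfl fun b _ => by
          rw [hco b (m + 2), if_pos (by omega)]
  · intro a
    ext n
    rw [PowerSeries.coeff_mul]
    have hsum : ∑ p ∈ Finset.HasAntidiagonal.antidiagonal n,
        PowerSeries.coeff p.1 (PowerSeries.X + Hbar Q a) *
          PowerSeries.coeff p.2 (PowerSeries.X + Hbar Q a + Hroot Q a) =
        (cRoot Q a n : ℚ) := by
      rw [cRoot_eq_sum a n, Nat.cast_sum]
      exact Finset.sum_congr rfl fun p _ => by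
        rw [coeff_left, coeff_right, Nat.cast_mul]
    rw [hsum, hco a n]
    split_ifs with h
    · rfl
    · rw [cRoot_small a (by omega), Nat.cast_zero]
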